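/- For every positive integer n and complex numbers λ, μ, the identity ∑_{k=1}^n C(n,k) H_k λ^(n-k) μ^k = H_n (λ+μ)^n - ∑_{j=1}^n λ^j (λ+μ)^(n-j) / j holds, where H_k is the k-th harmonic number. -/

import Mathlib

open Finset

noncomputable def Hc (k : ℕ) : ℂ := ∑ i ∈ Finset.Icc 1 k, (1 : ℂ) / i

lemma Hc_zero : Hc 0 = 0 := by simp [Hc]

lemma Hc_succ (k : ℕ) : Hc (k+1) = Hc k + 1/((k:ℂ)+1) := by
  rw [Hc, Finset.sum_Icc_succ_top (by omega : 1 ≤ k + 1)]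
  push_cast [Hc]
  ring

noncomputable def Lf (lam mu : ℂ) (n : ℕ) : ℂ :=
  ∑ k ∈ Finset.range (n+1), (n.choose k : ℂ) * Hc k * lam ^ (n-k) * mu ^ k

noncomputable def Rf (lam mu : ℂ) (n : ℕ) : ℂ :=
  Hc n * (lam+mu)^n - ∑ j ∈ Finset.range (n+1), lam^j * (lam+mu)^(n-j) / j

lemma sum_Icc_one_eq_range (n : ℕ) (f : ℕ → ℂ) (h0 : f 0 = 0) :
    ∑ k ∈ Finset.Icc 1 n, f k = ∑ k ∈ Finset.range (n+1), f k := by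
  rw [Finset.range_eq_Ico, Finset.sum_eq_sum_Ico_succ_bot (Nat.succ_pos n), h0, zero_add,
    ← Finset.Ico_add_one_right_eq_Icc]
  rfl

lemma aux_sum (n : ℕ) (lam mu : ℂ) :
    ∑ j ∈ Finset.range (n+1), (n.choose j : ℂ) * lam ^ (n-j) * mu ^ (j+1) / ((j:ℂ)+1)
      = ((lam+mu)^(n+1) - lam^(n+1)) / ((n:ℂ)+1) := by
  have hn1 : ((n:ℂ)+1) ≠ 0 := Nat.cast_add_one_ne_zero n
  rw [eq_div_iff hn1, Finset.sum_mul]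
  have hterm : ∀ j ∈ Finset.range (n+1),
      (n.choose j : ℂ) * lam ^ (n-j) * mu ^ (j+1) / ((j:ℂ)+1) * ((n:ℂ)+1)
        = ((n+1).choose (j+1) : ℂ) * lam ^ (n-j) * mu ^ (j+1) := by
    intro j _
    have hj1 : ((j:ℂ)+1) ≠ 0 := Nat.cast_add_one_ne_zero j
    have hnat : (n+1) * n.choose j = (n+1).choose (j+1) * (j+1) :=
      Nat.add_one_mul_choose_eq n j
    have hc : ((n:ℂ)+1) * (n.choose j : ℂ) = ((n+1).choose (j+1) : ℂ) * ((j:ℂ)+1) := by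
      exact_mod_cast congrArg (Nat.cast : ℕ → ℂ) hnat
    field_simp
    linear_combination lam ^ (n-j) * mu ^ (j+1) * hc
  rw [Finset.sum_congr rfl hterm]
  have hpow : (lam + mu)^(n+1)
      = ∑ k ∈ Finset.range (n+2), mu ^ k * lam ^ (n+1-k) * ((n+1).choose k : ℂ) := by
    rw [add_comm lam mu, add_pow]
  have hpow2 : (lam + mu)^(n+1)
      = (∑ j ∈ Finset.range (n+1), mu ^ (j+1) * lam ^ (n-j) * ((n+1).choose (j+1) : ℂ))
        + lam ^ (n+1) := by
    rw [hpow, Finset.sum_range_succ']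
    simp [Nat.succ_sub_succ]
  rw [hpow2, add_sub_cancel_right]
  exact Finset.sum_congr rfl (fun j _ => by ring)

lemma L_rec (n : ℕ) (lam mu : ℂ) :
    Lf lam mu (n+1) = (lam+mu) * Lf lam mu n + ((lam+mu)^(n+1) - lam^(n+1)) / ((n:ℂ)+1) := by
  have hmu : mu * Lf lam mu n
      = ∑ j ∈ Finset.range (n+1), (n.choose j : ℂ) * Hc j * lam ^ (n-j) * mu ^ (j+1) := by
    rw [Lf, Finset.mul_sum]
    exact Finset.sum_congr rfl (fun j _ => by ring)
  have hlam : lam * Lf lam mu n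
      = ∑ j ∈ Finset.range (n+1), (n.choose (j+1) : ℂ) * Hc (j+1) * lam ^ (n-j) * mu ^ (j+1) := by
    have h1 : ∑ k ∈ Finset.range (n+2), (n.choose k : ℂ) * Hc k * lam ^ (n+1-k) * mu ^ k
        = lam * Lf lam mu n := by
      rw [Finset.sum_range_succ, Nat.choose_succ_self, Lf, Finset.mul_sum]
      push_cast
      rw [zero_mul, zero_mul, zero_mul, add_zero]
      refine Finset.sum_congr rfl (fun k hk => ?_)
      have hk' : k ≤ n := by simpa [Nat.lt_succ_iff] using hk
      have : n + 1 - k = (n - k) + 1 := by omega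
      rw [this, pow_succ]
      ring
    rw [← h1, Finset.sum_range_succ']
    simp [Hc_zero, Nat.succ_sub_succ]
  have hexp : Lf lam mu (n+1)
      = ∑ j ∈ Finset.range (n+1),
          (((n.choose j : ℂ) + (n.choose (j+1) : ℂ)) * (Hc j + 1/((j:ℂ)+1))
            * lam ^ (n-j) * mu ^ (j+1)) := by
    rw [Lf, Finset.sum_range_succ']
    simp only [Hc_zero, mul_zero, zero_mul, pow_zero, mul_one, add_zero]
    refine Finset.sum_congr rfl (fun j _ => ?_)
    rw [Nat.choose_succ_succ, Nat.succ_sub_succ, Hc_succ]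
    push_cast
    ring
  rw [hexp, add_mul, hmu, hlam, ← aux_sum n lam mu, ← Finset.sum_add_distrib,
    ← Finset.sum_add_distrib]
  refine Finset.sum_congr rfl (fun j _ => ?_)
  rw [Hc_succ]
  ring

lemma R_rec (n : ℕ) (lam mu : ℂ) :
    Rf lam mu (n+1) = (lam+mu) * Rf lam mu n + ((lam+mu)^(n+1) - lam^(n+1)) / ((n:ℂ)+1) := by
  have hs : ∑ j ∈ Finset.range (n+2), lam^j * (lam+mu)^(n+1-j) / j
      = (lam+mu) * ∑ j ∈ Finset.range (n+1), lam^j * (lam+mu)^(n-j) / j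
        + lam^(n+1) / ((n:ℂ)+1) := by
    rw [Finset.sum_range_succ, Finset.mul_sum]
    push_cast
    congr 1
    · refine Finset.sum_congr rfl (fun j hj => ?_)
      have hj' : j ≤ n := by simpa [Nat.lt_succ_iff] using hj
      have : n + 1 - j = (n - j) + 1 := by omega
      rw [this, pow_succ]
      ring
    · simp
  rw [Rf, Rf, hs, Hc_succ]
  push_cast
  ring

lemma L_eq_R (n : ℕ) (lam mu : ℂ) : Lf lam mu n = Rf lam mu n := by
  induction n with
  | zero => simp [Lf, Rf, Hc_zero]
  | succ n ih => rw [L_rec, R_rec, ih]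

theorem boyadzhiev_identity (n : ℕ) (hn : 1 ≤ n) (lam mu : ℂ) :
    ∑ k ∈ Finset.Icc 1 n, (n.choose k : ℂ) * (∑ i ∈ Finset.Icc 1 k, (1 : ℂ) / i) *
        lam ^ (n - k) * mu ^ k
      = (∑ i ∈ Finset.Icc 1 n, (1 : ℂ) / i) * (lam + mu) ^ n -
        ∑ j ∈ Finset.Icc 1 n, lam ^ j * (lam + mu) ^ (n - j) / j := by
  have h1 : ∑ k ∈ Finset.Icc 1 n, (n.choose k : ℂ) * (∑ i ∈ Finset.Icc 1 k, (1 : ℂ) / i) *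
        lam ^ (n - k) * mu ^ k = Lf lam mu n := by
    rw [Lf, sum_Icc_one_eq_range]
    · exact Finset.sum_congr rfl (fun k _ => by rw [Hc])
    · simp [Hc_zero]
  have h2 : ∑ j ∈ Finset.Icc 1 n, lam ^ j * (lam + mu) ^ (n - j) / j
      = ∑ j ∈ Finset.range (n+1), lam^j * (lam+mu)^(n-j) / j := by
    rw [sum_Icc_one_eq_range]
    simp
  rw [h1, h2, L_eq_R, Rf, Hc]
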